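/- Let a_0 ≥ 1, a_1 ≥ 2 be integers, k > 1 an integer, and σ a permutation of {0,1}. Then [a_0; a_1] is a (σ,k)-permutiple if and only if σ is the transposition swapping 0 and 1 and a_0 = k·a_1. In particular, every 2-digit permutiple has the form [k·s; s] for some integer s ≥ 2. -/

import Mathlib

/-- Value of the finite simple continued fraction `[x₀; x₁, …, xₙ]`. -/
def cfv : List ℚ → ℚ
  | [] => 0
  | [x] => x
  | x :: y :: t => x + 1 / cfv (y :: t)

/-- The continuant `K(x₀, …, xₙ)`: `K() = 1`, `K(x₀) = x₀`, and the usual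
three-term recurrence. -/
def cont : List ℕ → ℕ
  | [] => 1
  | [x] => x
  | x :: y :: t => x * cont (y :: t) + cont t

/-- The digit string of `a`, as a list of rationals. -/
def digitsQ {N : ℕ} (a : Fin N → ℕ) : List ℚ := (List.ofFn a).map (fun x => (x : ℚ))

/-- `[a₀; a₁, …, aₙ]` (canonical: positive digits, last digit ≥ 2) is a
`(σ,k)`-permutiple: it equals `k` times the continued fraction of the permuted digits. -/
def IsPermutiple {n : ℕ} (a : Fin (n+1) → ℕ) (σ : Equiv.Perm (Fin (n+1))) (k : ℕ) : Prop :=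
  (∀ j, 0 < a j) ∧ 2 ≤ a (Fin.last n) ∧ 1 < k ∧
    cfv (digitsQ a) = k * cfv (digitsQ (a ∘ σ))

/-- A `(σ,k)`-permutiple is continuant-preserving if
`K(a₀,…,aₙ) = K(a_{σ(0)},…,a_{σ(n)})`. -/
def ContinuantPreserving {n : ℕ} (a : Fin (n+1) → ℕ) (σ : Equiv.Perm (Fin (n+1))) : Prop :=
  cont (List.ofFn a) = cont (List.ofFn (a ∘ σ))

/-- A `(σ,k)`-permutiple is perfect if `a_j = k·a_{σ(j)}` for even `j` and
`a_{σ(j)} = k·a_j` for odd `j`. -/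
def IsPerfect {n : ℕ} (a : Fin (n+1) → ℕ) (σ : Equiv.Perm (Fin (n+1))) (k : ℕ) : Prop :=
  ∀ j : Fin (n+1), (Even (j : ℕ) → a j = k * a (σ j)) ∧ (Odd (j : ℕ) → a (σ j) = k * a j)

/-- A `(σ,k)`-permutiple is symmetric if `a_j·a_{n−j} = a_{σ(j)}·a_{σ(n−j)}` for all `j`. -/
def IsSymmetric {n : ℕ} (a : Fin (n+1) → ℕ) (σ : Equiv.Perm (Fin (n+1))) : Prop :=
  ∀ j : Fin (n+1), a j * a j.rev = a (σ j) * a (σ j.rev)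

/-- A Landess permutiple: a continuant-preserving `(σ,k)`-permutiple with
`q_{n−1} = q'_{n−1}` and `p_{n−1} = k·p'_{n−1}`. -/
def IsLandess {n : ℕ} (a : Fin (n+1) → ℕ) (σ : Equiv.Perm (Fin (n+1))) (k : ℕ) : Prop :=
  IsPermutiple a σ k ∧ ContinuantPreserving a σ ∧
    cont ((List.ofFn a).tail.dropLast) = cont ((List.ofFn (a ∘ σ)).tail.dropLast) ∧
    cont ((List.ofFn a).dropLast) = k * cont ((List.ofFn (a ∘ σ)).dropLast)

/-- For `a₀ ≥ 1`, `a₁ ≥ 2`, `k > 1`, and a permutation `σ` of `{0,1}`: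
`[a₀; a₁]` is a `(σ,k)`-permutiple iff `σ` is the transposition swapping `0` and `1`
and `a₀ = k·a₁` (so every 2-digit permutiple has the form `[k·s; s]` with `s ≥ 2`). -/
theorem stmt4 (a : Fin 2 → ℕ) (σ : Equiv.Perm (Fin 2)) (k : ℕ)
    (h0 : 1 ≤ a 0) (h1 : 2 ≤ a 1) (hk : 1 < k) :
    cfv (digitsQ a) = k * cfv (digitsQ (a ∘ σ)) ↔
      σ = Equiv.swap 0 1 ∧ a 0 = k * a 1 := by

  have ha0 : (0:ℚ) < (a 0 : ℚ) := by exact_mod_cast h0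
  have ha1 : (0:ℚ) < (a 1 : ℚ) := by positivity
  have ha1' : (2:ℚ) ≤ (a 1 : ℚ) := by exact_mod_cast h1
  have hk' : (1:ℚ) < (k : ℚ) := by exact_mod_cast hk
  have hdich : σ = 1 ∨ σ = Equiv.swap 0 1 := by
    revert σ; decide
  rcases hdich with rfl | rfl
  · simp only [digitsQ, List.ofFn_succ, Fin.succ_zero_eq_one, List.ofFn_zero, List.map, Fin.mk_zero, Fin.mk_one,
      Equiv.Perm.coe_one, Function.comp_id, cfv, List.map_id', bind, pure, List.flatMap_cons, List.flatMap_nil, List.singleton_append]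
    constructor
    · intro h
      exfalso
      have hpos : (0:ℚ) < (a 0 : ℚ) + 1 / (a 1 : ℚ) := by positivity
      nlinarith [h]
    · rintro ⟨h, -⟩
      exfalso
      have : (1 : Equiv.Perm (Fin 2)) ≠ Equiv.swap 0 1 := by decide
      exact this h
  · have hc : (a ∘ ⇑(Equiv.swap (0:Fin 2) 1)) = fun i => a (Equiv.swap 0 1 i) := rfl
    simp only [digitsQ, List.ofFn_succ, Fin.succ_zero_eq_one, List.ofFn_zero, List.map, hc, Fin.mk_zero, Fin.mk_one,
      Equiv.swap_apply_left, Equiv.swap_apply_right, cfv, List.map_id', bind, pure, List.flatMap_cons, List.flatMap_nil, List.singleton_append]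
    constructor
    · intro h
      refine ⟨trivial, ?_⟩
      have key : (a 0 : ℚ) * ((a 0 : ℚ) * (a 1 : ℚ) + 1)
          = ((k : ℚ) * (a 1 : ℚ)) * ((a 0 : ℚ) * (a 1 : ℚ) + 1) := by
        field_simp at h
        rw [h]; ring
      have hne : ((a 0 : ℚ) * (a 1 : ℚ) + 1) ≠ 0 := by positivity
      have : (a 0 : ℚ) = (k : ℚ) * (a 1 : ℚ) := mul_right_cancel₀ hne key
      exact_mod_cast this
    · rintro ⟨-, h⟩
      have h' : (a 0 : ℚ) = (k : ℚ) * (a 1 : ℚ) := by exact_mod_cast h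
      rw [h']
      field_simp
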